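/- For α, δ, ρ > 0 satisfying 1 > max{2δ/(α+ρ), (δ+ρ)/(2α)}, the interior prevention equilibrium values satisfy S̄₂ = 2δ/(√(ρ²+8αδ) - ρ) ∈ (0,1) and τ̄₂ = (2α - √(ρ²+8αδ) + ρ)/(2α) ∈ (0,1). -/
import Mathlib

open Real

/-- For `α, δ, ρ > 0` with `2δ/(α+ρ) < 1` and `(δ+ρ)/(2α) < 1`, the interior prevention
equilibrium values satisfy `S̄₂ = 2δ/(√(ρ²+8αδ) - ρ) ∈ (0,1)` and
`τ̄₂ = (2α - √(ρ²+8αδ) + ρ)/(2α) ∈ (0,1)`. -/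
theorem stmt_19 (α δ ρ : ℝ) (hα : 0 < α) (hδ : 0 < δ) (hρ : 0 < ρ)
    (h1 : 2 * δ / (α + ρ) < 1) (h2 : (δ + ρ) / (2 * α) < 1) :
    let S2 : ℝ := 2 * δ / (sqrt (ρ ^ 2 + 8 * α * δ) - ρ)
    let τ2 : ℝ := (2 * α - sqrt (ρ ^ 2 + 8 * α * δ) + ρ) / (2 * α)
    (0 < S2 ∧ S2 < 1) ∧ (0 < τ2 ∧ τ2 < 1) := by
  intro S2 τ2
  have h1' : 2 * δ < α + ρ := (div_lt_one (by linarith)).mp h1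
  have h2' : δ + ρ < 2 * α := (div_lt_one (by linarith)).mp h2
  set s := sqrt (ρ ^ 2 + 8 * α * δ) with hs
  have hsq : s ^ 2 = ρ ^ 2 + 8 * α * δ := sq_sqrt (by nlinarith)
  have hs0 : 0 ≤ s := sqrt_nonneg _
  have hsρ : ρ < s := by nlinarith
  have hsub : 0 < s - ρ := by linarith
  have hS2lt : 2 * δ < s - ρ := by nlinarith
  have hτpos : s < 2 * α + ρ := by nlinarith
  refine ⟨⟨div_pos (by linarith) hsub, (div_lt_one hsub).mpr hS2lt⟩,
    ⟨div_pos (by linarith) (by linarith), (div_lt_one (by linarith)).mpr (by linarith)⟩⟩
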